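/- Every finite set A of natural numbers containing 0 tiles modulo p: for every prime p and every finite nonempty set A ⊆ ℕ with 0 ∈ A, there exist a finite set B ⊆ ℕ and a positive integer N such that A(X)·B(X) ≡ 1 + X + ... + X^{N-1} (mod X^N - 1, p), where A(X) = Σ_{a∈A} X^a and B(X) = Σ_{b∈B} X^b. -/

import Mathlib

open Polynomial

/-- Any residue class in `F_p[X]/(X^N-1)` is represented by a 0/1 set polynomial. -/
lemma lift_lemma (p : ℕ) (hp : p.Prime) (N : ℕ) (hN : 0 < N) (g : Polynomial (ZMod p)) :
    ∃ B : Finset ℕ, ((X : Polynomial (ZMod p)) ^ N - 1) ∣ ((∑ b ∈ B, X ^ b) - g) := by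
  haveI : Fact p.Prime := ⟨hp⟩
  set f : Polynomial (ZMod p) := X ^ N - 1 with hf
  have hmonic : f.Monic := by
    simpa using monic_X_pow_sub_C (1 : ZMod p) hN.ne'
  set r := g %ₘ f with hr
  have hdvdgr : f ∣ g - r := by
    refine ⟨g /ₘ f, ?_⟩
    have := modByMonic_add_div g f
    linear_combination -this
  have hrdeg : r.natDegree < N := by
    have h1 : r.degree < f.degree := degree_modByMonic_lt g hmonic
    have h2 : f.degree = N := by
      simpa using degree_X_pow_sub_C hN (1 : ZMod p)
    by_cases hr0 : r = 0
    · simpa [hr0] using hN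
    · exact natDegree_lt_iff_degree_lt hr0 |>.2 (by rw [← h2]; exact h1)
  refine ⟨(Finset.range N).biUnion
    (fun i => (Finset.range ((r.coeff i).val)).image (fun j => i + N * j)), ?_⟩
  have hsum : (∑ b ∈ (Finset.range N).biUnion
      (fun i => (Finset.range ((r.coeff i).val)).image (fun j => i + N * j)),
        (X : Polynomial (ZMod p)) ^ b)
      = ∑ i ∈ Finset.range N, ∑ j ∈ Finset.range ((r.coeff i).val),
          (X : Polynomial (ZMod p)) ^ (i + N * j) := by
    rw [Finset.sum_biUnion]
    · refine Finset.sum_congr rfl fun i _ => ?_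
      rw [Finset.sum_image]
      intro a _ b _ hab
      exact Nat.eq_of_mul_eq_mul_left hN (Nat.add_left_cancel hab)
    · intro i hi i' hi' hne
      simp only [Finset.mem_coe, Finset.mem_range] at hi hi'
      simp only [Finset.disjoint_left, Finset.mem_image, Finset.mem_range]
      rintro a ⟨j, _, rfl⟩ ⟨j', _, h⟩
      apply hne
      have h1 := Nat.add_mul_mod_self_left i N j
      have h2 := Nat.add_mul_mod_self_left i' N j'
      rw [Nat.mod_eq_of_lt hi] at h1
      rw [Nat.mod_eq_of_lt hi'] at h2
      rw [← h1, ← h2, h]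
  rw [hsum]
  have key : f ∣ (∑ i ∈ Finset.range N, ∑ j ∈ Finset.range ((r.coeff i).val),
      (X : Polynomial (ZMod p)) ^ (i + N * j)) - r := by
    have hrsum : r = ∑ i ∈ Finset.range N, C (r.coeff i) * X ^ i := by
      conv_lhs => rw [r.as_sum_range' N hrdeg]
      simp [Polynomial.C_mul_X_pow_eq_monomial]
    have expand : (∑ i ∈ Finset.range N, ∑ j ∈ Finset.range ((r.coeff i).val),
        (X : Polynomial (ZMod p)) ^ (i + N * j)) - r
        = ∑ i ∈ Finset.range N, ((∑ j ∈ Finset.range ((r.coeff i).val),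
            (X : Polynomial (ZMod p)) ^ (i + N * j)) - C (r.coeff i) * X ^ i) := by
      rw [Finset.sum_sub_distrib, ← hrsum]
    rw [expand]
    refine Finset.dvd_sum fun i _ => ?_
    have : (∑ j ∈ Finset.range ((r.coeff i).val), (X : Polynomial (ZMod p)) ^ (i + N * j))
        - C (r.coeff i) * X ^ i
        = ∑ j ∈ Finset.range ((r.coeff i).val),
            ((X : Polynomial (ZMod p)) ^ (i + N * j) - X ^ i) := by
      have hcast : (((r.coeff i).val : ℕ) : Polynomial (ZMod p)) = C (r.coeff i) := by
        rw [← map_natCast (C : ZMod p →+* Polynomial (ZMod p)), ZMod.natCast_val, ZMod.cast_id]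
      rw [Finset.sum_sub_distrib, Finset.sum_const, Finset.card_range, nsmul_eq_mul, hcast]
    rw [this]
    refine Finset.dvd_sum fun j _ => ?_
    have : (X : Polynomial (ZMod p)) ^ (i + N * j) - X ^ i
        = X ^ i * ((X ^ N) ^ j - 1) := by
      rw [pow_add, pow_mul]
      ring
    rw [this]
    exact Dvd.dvd.mul_left (by simpa using sub_dvd_pow_sub_pow ((X : Polynomial (ZMod p)) ^ N) 1 j) _
  have : (∑ i ∈ Finset.range N, ∑ j ∈ Finset.range ((r.coeff i).val),
      (X : Polynomial (ZMod p)) ^ (i + N * j)) - g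
      = ((∑ i ∈ Finset.range N, ∑ j ∈ Finset.range ((r.coeff i).val),
      (X : Polynomial (ZMod p)) ^ (i + N * j)) - r) - (g - r) := by ring
  rw [this]
  exact dvd_sub key hdvdgr

/-- Every finite set of naturals containing 0 tiles modulo `p`:
`A(X)·B(X) ≡ 1 + X + ⋯ + X^{N-1}  (mod X^N - 1, p)`. -/
theorem stmt_1 (p : ℕ) (hp : p.Prime) (A : Finset ℕ) (hA : 0 ∈ A) :
    ∃ (B : Finset ℕ) (N : ℕ), 0 < N ∧
      ((X : Polynomial (ZMod p)) ^ N - 1) ∣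
        ((∑ a ∈ A, (X : Polynomial (ZMod p)) ^ a) * (∑ b ∈ B, (X : Polynomial (ZMod p)) ^ b)
          - ∑ i ∈ Finset.range N, (X : Polynomial (ZMod p)) ^ i) := by
  haveI : Fact p.Prime := ⟨hp⟩
  set Ap : Polynomial (ZMod p) := ∑ a ∈ A, X ^ a with hAp
  have hA0 : Ap ≠ 0 := by
    intro h
    have hc : Ap.coeff 0 = 1 := by
      rw [hAp, Polynomial.finset_sum_coeff]
      simp only [Polynomial.coeff_X_pow]
      rw [Finset.sum_ite_eq A 0 (fun _ => (1 : ZMod p))]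
      simp [hA]
    rw [h] at hc
    simp at hc
  set s := Ap.rootMultiplicity 1 with hs
  obtain ⟨u, hu, hnd⟩ := Ap.exists_eq_pow_rootMultiplicity_mul_and_not_dvd hA0 1
  set N := p ^ (s + 1) with hNdef
  have hNpos : 0 < N := pow_pos hp.pos _
  have hNgt : s + 1 < N := Nat.lt_pow_self hp.one_lt
  have hXN : (X : Polynomial (ZMod p)) ^ N - 1 = (X - 1) ^ N := by
    rw [hNdef, sub_pow_char_pow, one_pow]
  have hXne : (X - 1 : Polynomial (ZMod p)) ≠ 0 := by
    simpa using Polynomial.X_sub_C_ne_zero (1 : ZMod p)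
  have hgeom : (∑ i ∈ Finset.range N, (X : Polynomial (ZMod p)) ^ i) = (X - 1) ^ (N - 1) := by
    have h1 : (∑ i ∈ Finset.range N, (X : Polynomial (ZMod p)) ^ i) * (X - 1) = X ^ N - 1 :=
      geom_sum_mul X N
    rw [hXN] at h1
    have h2 : (X - 1 : Polynomial (ZMod p)) ^ N = (X - 1) ^ (N - 1) * (X - 1) := by
      rw [← pow_succ]
      congr 1
      omega
    exact mul_right_cancel₀ hXne (h1.trans h2)
  have hirr : Irreducible (X - 1 : Polynomial (ZMod p)) := by
    simpa using Polynomial.irreducible_X_sub_C (1 : ZMod p)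
  have hcop : IsCoprime ((X - 1 : Polynomial (ZMod p)) ^ N) u :=
    ((hirr.coprime_iff_not_dvd).2 (by simpa using hnd)).pow_left
  obtain ⟨c, d, hcd⟩ := hcop
  obtain ⟨B, hB⟩ := lift_lemma p hp N hNpos (d * (X - 1) ^ (N - 1 - s))
  refine ⟨B, N, hNpos, ?_⟩
  have hAg : Ap * (d * (X - 1) ^ (N - 1 - s)) = (X - 1) ^ (N - 1) * (d * u) := by
    rw [hu]
    simp only [Polynomial.C_1]
    have hexp : (X - 1 : Polynomial (ZMod p)) ^ s * (X - 1) ^ (N - 1 - s) = (X - 1) ^ (N - 1) := by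
      rw [← pow_add]
      congr 1
      omega
    calc (X - 1 : Polynomial (ZMod p)) ^ s * u * (d * (X - 1) ^ (N - 1 - s))
        = ((X - 1) ^ s * (X - 1) ^ (N - 1 - s)) * (d * u) := by ring
      _ = (X - 1) ^ (N - 1) * (d * u) := by rw [hexp]
  have key : ((X : Polynomial (ZMod p)) ^ N - 1) ∣
      (Ap * (d * (X - 1) ^ (N - 1 - s)) - ∑ i ∈ Finset.range N, X ^ i) := by
    rw [hXN, hgeom]
    have heq : Ap * (d * (X - 1) ^ (N - 1 - s)) - (X - 1) ^ (N - 1)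
        = (X - 1) ^ N * (-(c * (X - 1) ^ (N - 1))) := by
      rw [hAg]
      linear_combination ((X - 1 : Polynomial (ZMod p)) ^ (N - 1)) * hcd
    rw [heq]
    exact dvd_mul_right _ _
  have total : Ap * (∑ b ∈ B, (X : Polynomial (ZMod p)) ^ b) - ∑ i ∈ Finset.range N, X ^ i
      = Ap * ((∑ b ∈ B, X ^ b) - d * (X - 1) ^ (N - 1 - s))
        + (Ap * (d * (X - 1) ^ (N - 1 - s)) - ∑ i ∈ Finset.range N, X ^ i) := by ring
  rw [total]
  exact dvd_add (hB.mul_left Ap) key
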